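/- arXiv:2106.09364 — 2 statements merged into one kernel-verified Lean document; each statement's English description precedes it below -/
import Mathlib

section
/- Let A ⊂ ℝ^d be a uniformly discrete set. Then for every α > 0 there exists β > 0 such that the double sum ∑_{r∈A} ∑_{s∈A} (1+|r|)^α (1+|s|)^α (1+|r+s|)^{-β} (1+|r-s|)^{-β} converges (is finite). -/
open MeasureTheory Complex BigOperators
open scoped ENNReal NNReal

noncomputable section

/-- A subset of a metric space is *uniformly discrete* if there is a positive
lower bound for the distance between distinct points of the set. -/
def UnifDiscrete {E : Type*} [PseudoMetricSpace E] (A : Set E) : Prop :=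
  ∃ δ : ℝ, 0 < δ ∧ ∀ x ∈ A, ∀ y ∈ A, x ≠ y → δ ≤ dist x y

open Metric Finset in
/-- Volume packing: a `δ`-separated finite set inside the ball of radius `R` has at most
`((R + δ/2)/(δ/2))^d` points. -/
lemma sep_count {d : ℕ} {δ : ℝ} (hδ : 0 < δ) (u : Finset (EuclideanSpace ℝ (Fin d)))
    (hsep : ∀ x ∈ u, ∀ y ∈ u, x ≠ y → δ ≤ dist x y) {R : ℝ} (hR0 : 0 ≤ R)
    (hR : ∀ r ∈ u, ‖r‖ ≤ R) :
    (u.card : ℝ) ≤ ((R + δ / 2) / (δ / 2)) ^ d := by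
  let E := EuclideanSpace ℝ (Fin d)
  have hδ2 : (0:ℝ) < δ / 2 := by linarith
  have hdisj : (↑u : Set E).PairwiseDisjoint (fun r => ball r (δ / 2)) := by
    intro x hx y hy hxy
    apply ball_disjoint_ball
    calc δ / 2 + δ / 2 = δ := by ring
    _ ≤ dist x y := hsep x hx y hy hxy
  have hsub : (⋃ r ∈ u, ball r (δ / 2)) ⊆ ball (0 : E) (R + δ / 2) := by
    intro x hx
    simp only [Set.mem_iUnion] at hx
    obtain ⟨r, hr, hxr⟩ := hx
    rw [mem_ball] at hxr ⊢
    have := hR r hr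
    calc dist x 0 ≤ dist x r + dist r 0 := dist_triangle _ _ _
    _ < δ / 2 + R := by
        have : dist r 0 = ‖r‖ := by simp
        linarith [hxr, this ▸ hR r hr]
    _ = R + δ / 2 := by ring
  have hmeas : volume (⋃ r ∈ u, ball r (δ / 2)) = ∑ r ∈ u, volume (ball r (δ / 2)) :=
    measure_biUnion_finset hdisj (fun r _ => measurableSet_ball)
  have hballr : ∀ r : E, volume (ball r (δ / 2)) =
      ENNReal.ofReal ((δ / 2) ^ d) * volume (ball (0 : E) 1) := by
    intro r
    rw [Measure.addHaar_ball_of_pos volume r hδ2, finrank_euclideanSpace_fin]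
  have hball0 : volume (ball (0 : E) (R + δ / 2)) =
      ENNReal.ofReal ((R + δ / 2) ^ d) * volume (ball (0 : E) 1) := by
    rw [Measure.addHaar_ball_of_pos volume 0 (by linarith), finrank_euclideanSpace_fin]
  have hV0 : volume (ball (0 : E) 1) ≠ 0 := (measure_ball_pos volume 0 one_pos).ne'
  have hVt : volume (ball (0 : E) 1) ≠ ⊤ := measure_ball_lt_top.ne
  have key : (u.card : ℝ≥0∞) * (ENNReal.ofReal ((δ / 2) ^ d) * volume (ball (0 : E) 1)) ≤
      ENNReal.ofReal ((R + δ / 2) ^ d) * volume (ball (0 : E) 1) := by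
    calc (u.card : ℝ≥0∞) * (ENNReal.ofReal ((δ / 2) ^ d) * volume (ball (0 : E) 1))
        = ∑ r ∈ u, volume (ball r (δ / 2)) := by
          rw [Finset.sum_congr rfl (fun r _ => hballr r), Finset.sum_const, nsmul_eq_mul]
    _ = volume (⋃ r ∈ u, ball r (δ / 2)) := hmeas.symm
    _ ≤ volume (ball (0 : E) (R + δ / 2)) := measure_mono hsub
    _ = _ := hball0
  rw [← mul_assoc] at key
  have key2 : (u.card : ℝ≥0∞) * ENNReal.ofReal ((δ / 2) ^ d) ≤
      ENNReal.ofReal ((R + δ / 2) ^ d) :=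
    (ENNReal.mul_le_mul_iff_left hV0 hVt).1 key
  -- convert to a real inequality
  have hcast : (u.card : ℝ≥0∞) = ENNReal.ofReal (u.card : ℝ) := by
    simp
  rw [hcast, ← ENNReal.ofReal_mul (by positivity)] at key2
  have hreal : (u.card : ℝ) * (δ / 2) ^ d ≤ (R + δ / 2) ^ d := by
    have := (ENNReal.ofReal_le_ofReal_iff (by positivity)).1 key2
    linarith
  rw [div_pow]
  rw [le_div_iff₀ (by positivity)]
  exact hreal

open Finset in
/-- Summability of `(1+‖r‖)^{-t}` over a uniformly discrete set for `t > d + 1`. -/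
lemma sep_summable {d : ℕ} {A : Set (EuclideanSpace ℝ (Fin d))} (hA : UnifDiscrete A)
    {t : ℝ} (ht : (d : ℝ) + 1 < t) :
    Summable (fun r : A => (1 + ‖(r : EuclideanSpace ℝ (Fin d))‖) ^ (-t)) := by
  classical
  obtain ⟨δ, hδ, hsep⟩ := hA
  set C : ℝ := (2 / δ + 1) ^ d with hC
  have hC0 : 0 < C := by positivity
  -- base summable series
  have hbase : Summable (fun n : ℕ => ((n : ℝ) + 1) ^ ((d : ℝ) - t)) := by
    have h1 : Summable (fun n : ℕ => (n : ℝ) ^ ((d : ℝ) - t)) :=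
      Real.summable_nat_rpow.2 (by linarith)
    have h2 := h1.comp_injective Nat.succ_injective
    refine h2.congr fun n => ?_
    have h3 : ((Nat.succ n : ℕ) : ℝ) = (n : ℝ) + 1 := by push_cast; ring
    simp only [Function.comp_apply, h3]
  set S : ℝ := ∑' n : ℕ, ((n : ℝ) + 1) ^ ((d : ℝ) - t) with hS
  apply summable_of_sum_le (c := C * S)
  · intro r
    positivity
  · intro u
    -- pass to the image in E
    set v : Finset (EuclideanSpace ℝ (Fin d)) := u.image (fun r : A => (r : EuclideanSpace ℝ (Fin d))) with hv
    have hinj : Set.InjOn (fun r : A => (r : EuclideanSpace ℝ (Fin d))) ↑u := fun a _ b _ h => Subtype.ext h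
    have himg : ∑ x ∈ v, (1 + ‖x‖) ^ (-t)
        = ∑ r ∈ u, (1 + ‖(r : EuclideanSpace ℝ (Fin d))‖) ^ (-t) :=
      Finset.sum_image (f := fun x => (1 + ‖x‖) ^ (-t)) (fun a ha b hb h => hinj ha hb h)
    rw [← himg]
    have hvA : ∀ x ∈ v, x ∈ A := by
      intro x hx
      rw [hv, Finset.mem_image] at hx
      obtain ⟨r, _, rfl⟩ := hx
      exact r.2
    set N : ℕ := v.sup (fun x => ⌊‖x‖⌋₊) + 1 with hN
    have hmaps : ∀ x ∈ v, ⌊‖x‖⌋₊ ∈ Finset.range N := by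
      intro x hx
      rw [Finset.mem_range, hN]
      exact Nat.lt_succ_of_le (Finset.le_sup (f := fun x => ⌊‖x‖⌋₊) hx)
    have hfib := Finset.sum_fiberwise_of_maps_to hmaps (fun x => (1 + ‖x‖) ^ (-t))
    rw [← hfib]
    have hinner : ∀ n ∈ Finset.range N,
        ∑ x ∈ v.filter (fun x => ⌊‖x‖⌋₊ = n), (1 + ‖x‖) ^ (-t)
          ≤ C * ((n : ℝ) + 1) ^ ((d : ℝ) - t) := by
      intro n _
      set w := v.filter (fun x => ⌊‖x‖⌋₊ = n) with hw
      have hwv : ∀ x ∈ w, x ∈ v := fun x hx => (Finset.mem_filter.1 hx).1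
      have hfloor : ∀ x ∈ w, ⌊‖x‖⌋₊ = n := fun x hx => (Finset.mem_filter.1 hx).2
      -- each term is at most (1+n)^{-t}
      have hterm : ∀ x ∈ w, (1 + ‖x‖) ^ (-t) ≤ ((n : ℝ) + 1) ^ (-t) := by
        intro x hx
        apply Real.rpow_le_rpow_of_nonpos (by positivity) _ (by linarith)
        have : (n : ℝ) ≤ ‖x‖ := by
          rw [← hfloor x hx]
          exact Nat.floor_le (norm_nonneg x)
        linarith
      -- count of w
      have hcard : (w.card : ℝ) ≤ (((n : ℝ) + 1 + δ / 2) / (δ / 2)) ^ d := by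
        apply sep_count hδ w
        · intro x hx y hy hxy
          exact hsep x (hvA x (hwv x hx)) y (hvA y (hwv y hy)) hxy
        · positivity
        · intro x hx
          have h1 : ‖x‖ < ⌊‖x‖⌋₊ + 1 := Nat.lt_floor_add_one _
          rw [hfloor x hx] at h1
          linarith
      have hcard2 : (w.card : ℝ) ≤ C * ((n : ℝ) + 1) ^ d := by
        refine hcard.trans ?_
        rw [hC, ← mul_pow]
        apply pow_le_pow_left₀ (by positivity)
        rw [div_le_iff₀ (by linarith)]
        have hn1 : (1 : ℝ) ≤ (n : ℝ) + 1 := by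
          have : (0:ℝ) ≤ n := Nat.cast_nonneg n
          linarith
        have hδδ : (2 / δ) * (δ / 2) = 1 := by field_simp
        nlinarith [mul_le_mul_of_nonneg_right hn1 (le_of_lt (half_pos hδ)), hδδ]
      calc ∑ x ∈ w, (1 + ‖x‖) ^ (-t) ≤ ∑ _x ∈ w, ((n : ℝ) + 1) ^ (-t) :=
            Finset.sum_le_sum hterm
      _ = (w.card : ℝ) * ((n : ℝ) + 1) ^ (-t) := by
            rw [Finset.sum_const, nsmul_eq_mul]
      _ ≤ C * ((n : ℝ) + 1) ^ d * ((n : ℝ) + 1) ^ (-t) := by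
            apply mul_le_mul_of_nonneg_right hcard2 (by positivity)
      _ = C * ((n : ℝ) + 1) ^ ((d : ℝ) - t) := by
            rw [mul_assoc, ← Real.rpow_natCast ((n:ℝ)+1) d,
              ← Real.rpow_add (by positivity)]
            ring_nf
    calc ∑ n ∈ Finset.range N, ∑ x ∈ v.filter (fun x => ⌊‖x‖⌋₊ = n), (1 + ‖x‖) ^ (-t)
        ≤ ∑ n ∈ Finset.range N, C * ((n : ℝ) + 1) ^ ((d : ℝ) - t) :=
          Finset.sum_le_sum hinner
    _ = C * ∑ n ∈ Finset.range N, ((n : ℝ) + 1) ^ ((d : ℝ) - t) := by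
          rw [Finset.mul_sum]
    _ ≤ C * S := by
          apply mul_le_mul_of_nonneg_left _ hC0.le
          exact Summable.sum_le_tsum _ (fun n _ => by positivity) hbase

set_option maxHeartbeats 1000000 in
/-- For a uniformly discrete `A ⊆ ℝ^d` and every `α > 0` there is `β > 0` making the
double series `∑_{r,s ∈ A} (1+|r|)^α (1+|s|)^α (1+|r+s|)^{-β} (1+|r-s|)^{-β}` convergent. -/
theorem stmt1 {d : ℕ} (A : Set (EuclideanSpace ℝ (Fin d))) (hA : UnifDiscrete A)
    (α : ℝ) (hα : 0 < α) :
    ∃ β : ℝ, 0 < β ∧ Summable (fun p : (↥A) × (↥A) =>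
      (1 + ‖(p.1 : EuclideanSpace ℝ (Fin d))‖) ^ α *
      (1 + ‖(p.2 : EuclideanSpace ℝ (Fin d))‖) ^ α *
      (1 + ‖(p.1 : EuclideanSpace ℝ (Fin d)) + (p.2 : EuclideanSpace ℝ (Fin d))‖) ^ (-β) *
      (1 + ‖(p.1 : EuclideanSpace ℝ (Fin d)) - (p.2 : EuclideanSpace ℝ (Fin d))‖) ^ (-β)) := by
  set t : ℝ := (d : ℝ) + 2 with htdef
  refine ⟨2 * (α + t), by positivity, ?_⟩
  set β : ℝ := 2 * (α + t) with hβdef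
  have hβ : 0 < β := by positivity
  have hsum : Summable (fun r : A => (1 + ‖(r : EuclideanSpace ℝ (Fin d))‖) ^ (-t)) :=
    sep_summable hA (by rw [htdef]; linarith)
  have hprod : Summable (fun p : (↥A) × (↥A) =>
      (1 + ‖(p.1 : EuclideanSpace ℝ (Fin d))‖) ^ (-t) *
      (1 + ‖(p.2 : EuclideanSpace ℝ (Fin d))‖) ^ (-t)) :=
    hsum.mul_of_nonneg hsum (fun r => by positivity) (fun r => by positivity)
  apply Summable.of_nonneg_of_le (fun p => by positivity) _ hprod
  intro p
  set r : EuclideanSpace ℝ (Fin d) := (p.1 : EuclideanSpace ℝ (Fin d)) with hr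
  set s : EuclideanSpace ℝ (Fin d) := (p.2 : EuclideanSpace ℝ (Fin d)) with hs
  set a : ℝ := ‖r‖
  set b : ℝ := ‖s‖
  have ha : 0 ≤ a := norm_nonneg _
  have hb : 0 ≤ b := norm_nonneg _
  set P : ℝ := (1 + ‖r + s‖) * (1 + ‖r - s‖) with hP
  have hP1 : (1 : ℝ) ≤ P := by
    have h1 : (0:ℝ) ≤ ‖r + s‖ := norm_nonneg _
    have h2 : (0:ℝ) ≤ ‖r - s‖ := norm_nonneg _
    nlinarith
  have hPab : (1 + a) * (1 + b) ≤ P ^ 2 := by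
    have h2a : 2 * a ≤ ‖r + s‖ + ‖r - s‖ := by
      have : ‖(r + s) + (r - s)‖ ≤ ‖r + s‖ + ‖r - s‖ := norm_add_le _ _
      have he : (r + s) + (r - s) = (2 : ℝ) • r := by module
      rw [he, norm_smul] at this
      simpa using this
    have h2b : 2 * b ≤ ‖r + s‖ + ‖r - s‖ := by
      have : ‖(r + s) - (r - s)‖ ≤ ‖r + s‖ + ‖r - s‖ := norm_sub_le _ _
      have he : (r + s) - (r - s) = (2 : ℝ) • s := by module
      rw [he, norm_smul] at this
      simpa using this
    have hsum' : a + b ≤ ‖r + s‖ + ‖r - s‖ := by linarith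
    have hPge : 1 + a + b ≤ P := by
      have h1 : (0:ℝ) ≤ ‖r + s‖ := norm_nonneg _
      have h2 : (0:ℝ) ≤ ‖r - s‖ := norm_nonneg _
      nlinarith
    nlinarith
  -- main rpow bound
  have hmul : (1 + ‖r + s‖) ^ (-β) * (1 + ‖r - s‖) ^ (-β) = P ^ (-β) := by
    rw [hP, Real.mul_rpow (by positivity) (by positivity)]
  have hPβ : P ^ (-β) ≤ ((1 + a) * (1 + b)) ^ (-(β / 2)) := by
    have hQpos : (0:ℝ) < (1 + a) * (1 + b) := by positivity
    have h1 : ((1 + a) * (1 + b)) ^ (β / 2) ≤ (P ^ 2) ^ (β / 2) :=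
      Real.rpow_le_rpow hQpos.le hPab (by positivity)
    have h2 : (P ^ 2) ^ (β / 2) = P ^ β := by
      rw [← Real.rpow_natCast P 2, ← Real.rpow_mul (by linarith)]
      congr 1
      push_cast
      ring
    rw [h2] at h1
    rw [Real.rpow_neg hQpos.le, Real.rpow_neg (by linarith)]
    apply inv_anti₀ (by positivity) h1
  calc (1 + a) ^ α * (1 + b) ^ α * (1 + ‖r + s‖) ^ (-β) * (1 + ‖r - s‖) ^ (-β)
      = (1 + a) ^ α * (1 + b) ^ α * P ^ (-β) := by rw [mul_assoc, hmul]
  _ ≤ (1 + a) ^ α * (1 + b) ^ α * ((1 + a) * (1 + b)) ^ (-(β / 2)) := by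
      apply mul_le_mul_of_nonneg_left hPβ (by positivity)
  _ = (1 + a) ^ (-t) * (1 + b) ^ (-t) := by
      rw [Real.mul_rpow (by positivity) (by positivity),
        show (1 + a) ^ α * (1 + b) ^ α * ((1 + a) ^ (-(β / 2)) * (1 + b) ^ (-(β / 2)))
          = ((1 + a) ^ α * (1 + a) ^ (-(β / 2))) * ((1 + b) ^ α * (1 + b) ^ (-(β / 2))) from by
            ring,
        ← Real.rpow_add (by positivity : (0:ℝ) < 1 + a),
        ← Real.rpow_add (by positivity : (0:ℝ) < 1 + b),
        show α + -(β / 2) = -t from by rw [hβdef]; ring]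
end
end

section
/- Fix d ≥ 1 and N ≥ 1. For γ ∈ ℕ^d, let F_γ = {(α,β) ∈ ℕ^d × ℕ^d : |α| = |β| = |γ| and α + β = 2γ}, where |α| = α_1 + ⋯ + α_d. Suppose a family of complex numbers {a^γ : γ ∈ ℕ^d} satisfies ∑_{(α,β)∈F_γ} a^α · conj(a^β) = 0 for every γ ∈ ℕ^d with |γ| = N. Then a^γ = 0 for every γ with |γ| = N. -/
open MeasureTheory Complex BigOperators

noncomputable section

/-- The length `|γ| = γ₁ + ⋯ + γ_d` of a multi-index. -/
def mdeg {d : ℕ} (γ : Fin d → ℕ) : ℕ := ∑ i, γ i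

/-- The set `F_γ = {(α, β) : |α| = |β| = |γ|, α + β = 2γ}`. -/
def Fset {d : ℕ} (γ : Fin d → ℕ) : Set ((Fin d → ℕ) × (Fin d → ℕ)) :=
  {p | mdeg p.1 = mdeg γ ∧ mdeg p.2 = mdeg γ ∧ p.1 + p.2 = fun i => 2 * γ i}

/-- Each entry is at most the degree. -/
lemma entry_le_mdeg {d : ℕ} (γ : Fin d → ℕ) (i : Fin d) : γ i ≤ mdeg γ :=
  Finset.single_le_sum (fun j _ => Nat.zero_le (γ j)) (Finset.mem_univ i)

/-- Key lex lemma: if `α + β = 2γ` pointwise and `α ≠ γ`, then `α` or `β` is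
lex-greater than `γ`. -/
lemma lex_key {d : ℕ} {α β γ : Fin d → ℕ} (hs : α + β = fun i => 2 * γ i)
    (hne : α ≠ γ) : toLex γ < toLex α ∨ toLex γ < toLex β := by
  classical
  have hsum : ∀ i, α i + β i = 2 * γ i := fun i => congrFun hs i
  have hex : (Finset.univ.filter (fun i => α i ≠ γ i)).Nonempty := by
    by_contra hc
    rw [Finset.not_nonempty_iff_eq_empty, Finset.filter_eq_empty_iff] at hc
    exact hne (funext fun i => not_not.mp (hc (Finset.mem_univ i)))
  have himem := (Finset.univ.filter (fun i => α i ≠ γ i)).min'_mem hex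
  set i₀ := (Finset.univ.filter (fun i => α i ≠ γ i)).min' hex
  have hi0 : α i₀ ≠ γ i₀ := (Finset.mem_filter.mp himem).2
  have heqbelow : ∀ j, j < i₀ → α j = γ j := by
    intro j hj
    by_contra hc
    exact absurd ((Finset.univ.filter (fun i => α i ≠ γ i)).min'_le j
      (Finset.mem_filter.mpr ⟨Finset.mem_univ j, hc⟩)) (not_le.mpr hj)
  have heqbelow' : ∀ j, j < i₀ → β j = γ j := by
    intro j hj
    have := hsum j
    rw [heqbelow j hj] at this
    omega
  rcases lt_or_gt_of_ne hi0 with hlt | hgt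
  · -- α i₀ < γ i₀, so β i₀ > γ i₀
    right
    have hβ : γ i₀ < β i₀ := by have := hsum i₀; omega
    exact ⟨i₀, fun j hj => (heqbelow' j hj).symm, hβ⟩
  · left
    exact ⟨i₀, fun j hj => (heqbelow j hj).symm, hgt⟩

/-- If `∑_{(α,β) ∈ F_γ} a^α conj(a^β) = 0` for every multi-index `γ` with `|γ| = N ≥ 1`,
then `a^γ = 0` for every `γ` with `|γ| = N`. -/
theorem stmt2 {d N : ℕ} (hd : 1 ≤ d) (hN : 1 ≤ N) (a : (Fin d → ℕ) → ℂ)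
    (h : ∀ γ : Fin d → ℕ, mdeg γ = N →
      ∑ᶠ p ∈ Fset γ, a p.1 * (starRingEnd ℂ) (a p.2) = 0) :
    ∀ γ : Fin d → ℕ, mdeg γ = N → a γ = 0 := by
  classical
  by_contra hc
  push_neg at hc
  obtain ⟨γ₁, hγ₁N, hγ₁ne⟩ := hc
  set S : Set (Fin d → ℕ) := {γ | mdeg γ = N ∧ a γ ≠ 0} with hS
  have hSfin : S.Finite := by
    apply (Set.finite_Icc (0 : Fin d → ℕ) (fun _ => N)).subset
    rintro γ ⟨hγ, -⟩
    exact ⟨fun i => Nat.zero_le _, fun i => hγ ▸ entry_le_mdeg γ i⟩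
  have hSne : S.Nonempty := ⟨γ₁, hγ₁N, hγ₁ne⟩
  obtain ⟨γ₀, hγ₀S, hmax⟩ := hSfin.exists_maximalFor
    (toLex : (Fin d → ℕ) → Lex (Fin d → ℕ)) S hSne
  obtain ⟨hγ₀N, hγ₀ne⟩ := hγ₀S
  -- any multi-index lex-greater than γ₀ of degree N has zero coefficient
  have hvanish : ∀ α : Fin d → ℕ, mdeg α = N → toLex γ₀ < toLex α → a α = 0 := by
    intro α hαN hαlt
    by_contra hane
    exact absurd (hmax (j := α) ⟨hαN, hane⟩ hαlt.le) (not_le.mpr hαlt)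
  -- the finsum over Fset γ₀ collapses to the single term at (γ₀, γ₀)
  set f : (Fin d → ℕ) × (Fin d → ℕ) → ℂ := fun p => a p.1 * (starRingEnd ℂ) (a p.2) with hf
  have hkey : Fset γ₀ ∩ Function.support f = ↑({(γ₀, γ₀)} : Finset _) ∩ Function.support f := by
    ext p
    simp only [Set.mem_inter_iff, Function.mem_support, Finset.coe_singleton,
      Set.mem_singleton_iff]
    constructor
    · rintro ⟨⟨h1, h2, h3⟩, hfp⟩
      have ha1 : a p.1 ≠ 0 := fun hz => hfp (by simp [hf, hz])
      have ha2 : a p.2 ≠ 0 := fun hz => hfp (by simp [hf, hz])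
      have hp1 : p.1 = γ₀ := by
        by_contra hne
        rcases lex_key h3 hne with hl | hl
        · exact ha1 (hvanish p.1 (h1.trans hγ₀N) hl)
        · exact ha2 (hvanish p.2 (h2.trans hγ₀N) hl)
      have hp2 : p.2 = γ₀ := by
        funext i
        have := congrFun h3 i
        rw [hp1] at this
        simp only [Pi.add_apply] at this
        omega
      refine ⟨?_, hfp⟩
      exact Prod.ext hp1 hp2
    · rintro ⟨rfl, hfp⟩
      refine ⟨⟨rfl, rfl, ?_⟩, hfp⟩
      funext i
      simp [two_mul]
  have hsum0 := h γ₀ hγ₀N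
  rw [finsum_mem_eq_sum_of_inter_support_eq f hkey, Finset.sum_singleton] at hsum0
  simp only [hf] at hsum0
  rw [Complex.mul_conj] at hsum0
  have : Complex.normSq (a γ₀) = 0 := by exact_mod_cast hsum0
  exact hγ₀ne (Complex.normSq_eq_zero.mp this)
end
end
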